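/- Let f : ℝ^n → ℝ^n and g : ℝ^n × ℝ^m → ℝ^n be locally Lipschitz maps such that f is essentially nonnegative and, for every u ∈ ℝ^m with u ≥ 0 (componentwise), the map X ↦ g(X,u) is essentially nonnegative. Let u : [t₀,∞) → ℝ^m be a continuous control with u(t) ≥ 0 (componentwise) for all t ≥ t₀, and let X : [t₀,∞) → ℝ^n be a differentiable function satisfying X'(t) = f(X(t)) + g(X(t), u(t)) for all t ≥ t₀. If X(t₀) ≥ 0 (componentwise), then X(t) ≥ 0 (componentwise) for all t ≥ t₀. -/

import Mathlib

open Metric Set Filter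

section aux

/-- A locally Lipschitz map is Lipschitz (with some constant) on every compact set. -/
lemma LocallyLipschitz.exists_bound_on_isCompact {α β : Type*} [MetricSpace α] [MetricSpace β]
    {f : α → β} (hf : LocallyLipschitz f) {s : Set α} (hs : IsCompact s) :
    ∃ C : ℝ, 0 ≤ C ∧ ∀ x ∈ s, ∀ y ∈ s, dist (f x) (f y) ≤ C * dist x y := by
  rcases s.eq_empty_or_nonempty with rfl | hne
  · exact ⟨0, le_rfl, by simp⟩
  choose K t ht hl using hf
  have hr : ∀ x : α, ∃ r : ℝ, 0 < r ∧ ball x (2 * r) ⊆ t x := by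
    intro x
    rcases Metric.mem_nhds_iff.1 (ht x) with ⟨ε, hε, hb⟩
    exact ⟨ε / 2, by linarith, by
      refine Subset.trans ?_ hb
      apply ball_subset_ball; linarith⟩
  choose r hrpos hball using hr
  obtain ⟨F, hFs, hcover⟩ := hs.elim_nhds_subcover (fun x => ball x (r x))
    (fun x _ => ball_mem_nhds x (hrpos x))
  have hFne : F.Nonempty := by
    rcases hne with ⟨x, hx⟩
    rcases mem_iUnion₂.1 (hcover hx) with ⟨c, hc, _⟩
    exact ⟨c, hc⟩
  obtain ⟨D, hD⟩ := Metric.isBounded_iff.1 (hs.image (LocallyLipschitz.continuous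
    (fun x => ⟨K x, t x, ht x, hl x⟩))).isBounded
  set ρ : ℝ := F.inf' hFne r with hρ
  have hρpos : 0 < ρ := by
    rw [hρ, Finset.lt_inf'_iff]
    exact fun c _ => hrpos c
  set C : ℝ := max ((F.sup K : NNReal) : ℝ) (max D 0 / ρ) with hC
  have hC0 : 0 ≤ C := le_trans (div_nonneg (le_max_right D 0) hρpos.le) (le_max_right _ _)
  refine ⟨C, hC0, fun x hx y hy => ?_⟩
  rcases mem_iUnion₂.1 (hcover hx) with ⟨c, hcF, hxc⟩
  by_cases hd : dist x y < r c
  · have hrc := hrpos c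
    have hxt : x ∈ t c := hball c (by
      rw [mem_ball] at hxc ⊢; linarith)
    have hyt : y ∈ t c := hball c (by
      rw [mem_ball] at hxc ⊢
      have := dist_triangle y x c
      rw [dist_comm y x] at this; linarith)
    calc dist (f x) (f y) ≤ (K c : ℝ) * dist x y := (hl c).dist_le_mul x hxt y hyt
      _ ≤ C * dist x y := by
          apply mul_le_mul_of_nonneg_right _ dist_nonneg
          exact le_trans (by exact_mod_cast NNReal.coe_le_coe.2 (Finset.le_sup hcF))
            (le_max_left _ _)
  · push_neg at hd
    have hρle : ρ ≤ dist x y := le_trans (Finset.inf'_le r hcF) hd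
    have h1 : dist (f x) (f y) ≤ max D 0 :=
      le_trans (hD (mem_image_of_mem f hx) (mem_image_of_mem f hy)) (le_max_left _ _)
    calc dist (f x) (f y) ≤ max D 0 := h1
      _ = (max D 0 / ρ) * ρ := by field_simp
      _ ≤ (max D 0 / ρ) * dist x y := by
          apply mul_le_mul_of_nonneg_left hρle (div_nonneg (le_max_right D 0) hρpos.le)
      _ ≤ C * dist x y := mul_le_mul_of_nonneg_right (le_max_right _ _) dist_nonneg
end aux


/-- A map `f : ℝ^n → ℝ^n` is essentially nonnegative if `f_i(X) ≥ 0` whenever `X ≥ 0`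
componentwise and `X_i = 0`. -/
def EssentiallyNonneg {n : ℕ} (f : (Fin n → ℝ) → (Fin n → ℝ)) : Prop :=
  ∀ i : Fin n, ∀ X : Fin n → ℝ, (∀ j, 0 ≤ X j) → X i = 0 → 0 ≤ f X i

/-- Nonnegativity of controlled systems `X' = f(X) + g(X,u)`: if `f` and `g(·,u)`
(for every componentwise-nonnegative `u`) are essentially nonnegative, both locally
Lipschitz, the control `u(t)` is continuous and componentwise nonnegative on `[t₀,∞)`,
and `X` solves the ODE on `[t₀,∞)` with `X(t₀) ≥ 0` componentwise, then `X(t) ≥ 0`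
componentwise for all `t ≥ t₀`. -/
theorem nonneg_orthant_invariant
    (n m : ℕ)
    (f : (Fin n → ℝ) → (Fin n → ℝ))
    (g : (Fin n → ℝ) → (Fin m → ℝ) → (Fin n → ℝ))
    (hf_lip : LocallyLipschitz f)
    (hg_lip : LocallyLipschitz (fun p : (Fin n → ℝ) × (Fin m → ℝ) => g p.1 p.2))
    (hf_en : EssentiallyNonneg f)
    (hg_en : ∀ u : Fin m → ℝ, (∀ j, 0 ≤ u j) → EssentiallyNonneg (fun X => g X u))
    (t₀ : ℝ) (u : ℝ → Fin m → ℝ)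
    (hu_cont : ContinuousOn u (Set.Ici t₀))
    (hu_nonneg : ∀ t ∈ Set.Ici t₀, ∀ j, 0 ≤ u t j)
    (X : ℝ → Fin n → ℝ)
    (hX : ∀ t ∈ Set.Ici t₀, HasDerivAt X (f (X t) + g (X t) (u t)) t)
    (hX₀ : ∀ i, 0 ≤ X t₀ i) :
    ∀ t ∈ Set.Ici t₀, ∀ i, 0 ≤ X t i := by
  intro b hb
  have hb' : t₀ ≤ b := hb
  -- projections onto the nonnegative orthant and its "negative part"
  set P : (Fin n → ℝ) → (Fin n → ℝ) := fun x j => max (x j) 0 with hPdef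
  set Q : (Fin n → ℝ) → (Fin n → ℝ) := fun x j => min (x j) 0 with hQdef
  have hQP : ∀ x : Fin n → ℝ, x - P x = Q x := by
    intro x; funext j
    simp only [hPdef, hQdef, Pi.sub_apply]
    rcases le_total (x j) 0 with h | h
    · rw [max_eq_right h, min_eq_left h, sub_zero]
    · rw [max_eq_left h, min_eq_right h, sub_self]
  set v : ℝ → ℝ := fun t => ‖Q (X t)‖ with hvdef
  have hvnonneg : ∀ t, 0 ≤ v t := fun t => norm_nonneg _
  -- continuity of X on [t₀, ∞)
  have hXc : ContinuousOn X (Set.Ici t₀) := fun t ht => ((hX t ht).continuousAt).continuousWithinAt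
  have hQcont : Continuous Q := by
    apply continuous_pi
    intro j
    exact (continuous_apply j).min continuous_const
  have hPcont : Continuous P := by
    apply continuous_pi
    intro j
    exact (continuous_apply j).max continuous_const
  have hvcont : ContinuousOn v (Set.Icc t₀ b) :=
    (continuous_norm.comp hQcont).comp_continuousOn (hXc.mono Set.Icc_subset_Ici_self)
  -- compact sets
  have hAcomp : IsCompact (X '' Set.Icc t₀ b) :=
    (isCompact_Icc).image_of_continuousOn (hXc.mono Set.Icc_subset_Ici_self)
  have hKcomp : IsCompact (X '' Set.Icc t₀ b ∪ P '' (X '' Set.Icc t₀ b)) :=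
    hAcomp.union (hAcomp.image hPcont)
  have hUcomp : IsCompact (u '' Set.Icc t₀ b) :=
    (isCompact_Icc).image_of_continuousOn (hu_cont.mono Set.Icc_subset_Ici_self)
  set K : Set (Fin n → ℝ) := X '' Set.Icc t₀ b ∪ P '' (X '' Set.Icc t₀ b) with hKdef
  obtain ⟨C₁, hC₁0, hC₁⟩ := hf_lip.exists_bound_on_isCompact hKcomp
  obtain ⟨C₂, hC₂0, hC₂⟩ := hg_lip.exists_bound_on_isCompact (hKcomp.prod hUcomp)
  set L : ℝ := C₁ + C₂ with hLdef
  have hL0 : 0 ≤ L := add_nonneg hC₁0 hC₂0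
  -- the key vector-field estimate
  have hkey : ∀ t ∈ Set.Icc t₀ b, ∀ i : Fin n, X t i ≤ 0 →
      -(L * v t) ≤ f (X t) i + g (X t) (u t) i := by
    intro t ht i hti
    have htI : t ∈ Set.Ici t₀ := ht.1
    have hPK : P (X t) ∈ K := Or.inr (mem_image_of_mem P (mem_image_of_mem X ht))
    have hXK : X t ∈ K := Or.inl (mem_image_of_mem X ht)
    have hPnn : ∀ j, 0 ≤ P (X t) j := fun j => le_max_right _ _
    have hPi : P (X t) i = 0 := max_eq_right hti
    have hfP : 0 ≤ f (P (X t)) i := hf_en i _ hPnn hPi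
    have hgP : 0 ≤ g (P (X t)) (u t) i := hg_en (u t) (hu_nonneg t htI) i _ hPnn hPi
    have hdist : dist (X t) (P (X t)) = v t := by
      rw [dist_eq_norm, hQP (X t)]
    have hfd : dist (f (X t)) (f (P (X t))) ≤ C₁ * v t := by
      rw [← hdist]; exact hC₁ _ hXK _ hPK
    have hgd : dist (g (X t) (u t)) (g (P (X t)) (u t)) ≤ C₂ * v t := by
      have := hC₂ (X t, u t) ⟨hXK, mem_image_of_mem u ht⟩ (P (X t), u t)
        ⟨hPK, mem_image_of_mem u ht⟩
      simp only [Prod.dist_eq, dist_self] at this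
      rw [max_eq_left dist_nonneg, hdist] at this
      exact this
    have h1 : f (P (X t)) i - f (X t) i ≤ C₁ * v t := by
      calc f (P (X t)) i - f (X t) i ≤ |f (P (X t)) i - f (X t) i| := le_abs_self _
        _ = ‖(f (P (X t)) - f (X t)) i‖ := by simp [Real.norm_eq_abs]
        _ ≤ ‖f (P (X t)) - f (X t)‖ := norm_le_pi_norm _ i
        _ = dist (f (X t)) (f (P (X t))) := by rw [dist_eq_norm, ← norm_neg]; congr 1; abel
        _ ≤ C₁ * v t := hfd
    have h2 : g (P (X t)) (u t) i - g (X t) (u t) i ≤ C₂ * v t := by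
      calc g (P (X t)) (u t) i - g (X t) (u t) i
          ≤ |g (P (X t)) (u t) i - g (X t) (u t) i| := le_abs_self _
        _ = ‖(g (P (X t)) (u t) - g (X t) (u t)) i‖ := by simp [Real.norm_eq_abs]
        _ ≤ ‖g (P (X t)) (u t) - g (X t) (u t)‖ := norm_le_pi_norm _ i
        _ = dist (g (X t) (u t)) (g (P (X t)) (u t)) := by
            rw [dist_eq_norm, ← norm_neg]; congr 1; abel
        _ ≤ C₂ * v t := hgd
    have : -(C₁ * v t) ≤ f (X t) i - f (P (X t)) i + f (P (X t)) i := by linarith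
    simp only [hLdef]; nlinarith
  -- Grönwall setup
  have hgron : ∀ s ∈ Set.Icc t₀ b, v s ≤ gronwallBound 0 L 0 (s - t₀) := by
    apply le_gronwallBound_of_liminf_deriv_right_le (f' := fun t => L * v t) hvcont
    · -- liminf right-derivative estimate
      intro t ht r hr
      have htI : t ∈ Set.Ici t₀ := ht.1
      have htIcc : t ∈ Set.Icc t₀ b := ⟨ht.1, ht.2.le⟩
      set ε' : ℝ := (r - L * v t) / 2 with hε'
      have hrr : L * v t < r := hr
      have hε'pos : 0 < ε' := by
        rw [hε']
        have : 0 < r - L * v t := sub_pos.2 hrr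
        positivity
      -- differentiability bound
      have hder := (hX t htI).isLittleO.def hε'pos
      -- the continuity escape for positive coordinates
      have hpos : ∀ᶠ z in nhds t, ∀ i : Fin n, 0 < X t i → 0 < X z i := by
        rw [eventually_all]
        intro i
        by_cases h : 0 < X t i
        · have hc : Tendsto (fun z => X z i) (nhds t) (nhds (X t i)) :=
            ((continuous_apply i).continuousAt.comp (hX t htI).continuousAt)
          filter_upwards [hc.eventually (eventually_gt_nhds h)] with z hz _
          exact hz
        · filter_upwards with z hz
          exact absurd hz h
      have hev : ∀ᶠ z in nhdsWithin t (Set.Ioi t),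
          v z ≤ v t + (z - t) * (L * v t + ε') := by
        filter_upwards [nhdsWithin_le_nhds hder, nhdsWithin_le_nhds hpos,
          self_mem_nhdsWithin] with z hz hzpos hzt
        have hzt' : t < z := hzt
        have hbnd : 0 ≤ v t + (z - t) * (L * v t + ε') := by
          have := hvnonneg t
          have h1 : 0 ≤ (z - t) * (L * v t + ε') :=
            mul_nonneg (by linarith) (by nlinarith [hvnonneg t])
          linarith
        rw [hvdef]
        rw [pi_norm_le_iff_of_nonneg hbnd]
        intro i
        simp only [hQdef, Real.norm_eq_abs]
        rw [abs_le]
        constructor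
        · rcases le_or_gt (X z i) 0 with hzi | hzi
          · rw [min_eq_left hzi]
            -- X z i is negative; then X t i ≤ 0
            have hti : X t i ≤ 0 := by
              by_contra hcon
              push_neg at hcon
              exact absurd (hzpos i hcon) (not_lt.2 hzi)
            -- componentwise derivative bound
            have hcomp : |X z i - X t i - (z - t) * (f (X t) + g (X t) (u t)) i| ≤
                ε' * (z - t) := by
              have h1 : ‖(X z - X t - (z - t) • (f (X t) + g (X t) (u t))) i‖ ≤
                  ‖X z - X t - (z - t) • (f (X t) + g (X t) (u t))‖ := norm_le_pi_norm _ i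
              simp only [Pi.sub_apply, Pi.smul_apply, smul_eq_mul, Real.norm_eq_abs] at h1
              calc |X z i - X t i - (z - t) * (f (X t) + g (X t) (u t)) i| ≤
                  ‖X z - X t - (z - t) • (f (X t) + g (X t) (u t))‖ := h1
                _ ≤ ε' * ‖z - t‖ := hz
                _ = ε' * (z - t) := by rw [Real.norm_eq_abs, abs_of_pos (by linarith)]
            have hXti : -(v t) ≤ X t i := by
              have h1 : |Q (X t) i| ≤ v t := by
                rw [hvdef]
                simpa [Real.norm_eq_abs] using norm_le_pi_norm (Q (X t)) i
              have h2 : Q (X t) i = X t i := min_eq_left hti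
              rw [h2] at h1
              exact neg_le_of_abs_le h1
            have hFi : -(L * v t) ≤ (f (X t) + g (X t) (u t)) i := hkey t htIcc i hti
            have habs := abs_le.1 hcomp
            have hzt2 : (0:ℝ) < z - t := by linarith
            nlinarith [habs.1, habs.2]
          · rw [min_eq_right hzi.le]
            simp only [neg_le, neg_zero, neg_neg] at *
            linarith
        · rcases le_or_gt (X z i) 0 with hzi | hzi
          · rw [min_eq_left hzi]; linarith
          · rw [min_eq_right hzi.le]; exact hbnd
      -- convert to the frequently statement
      apply Filter.Eventually.frequently
      filter_upwards [hev, self_mem_nhdsWithin] with z hz hzt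
      have hzt' : t < z := hzt
      have h0 : (0:ℝ) < z - t := by linarith
      rw [inv_mul_lt_iff₀ h0]
      have : L * v t + ε' < r := by simp only [hε']; linarith
      nlinarith
    · have hq : Q (X t₀) = 0 := by
        funext j
        exact min_eq_right (hX₀ j)
      show ‖Q (X t₀)‖ ≤ 0
      rw [hq, norm_zero]
    · intro t ht
      simp
  -- conclude
  intro i
  have := hgron b ⟨hb', le_rfl⟩
  rw [gronwallBound_ε0_δ0] at this
  have hv0 : v b = 0 := le_antisymm this (hvnonneg b)
  have hQ0 : |Q (X b) i| ≤ 0 := by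
    rw [← hv0, hvdef]
    simpa [Real.norm_eq_abs] using norm_le_pi_norm (Q (X b)) i
  have : Q (X b) i = 0 := abs_eq_zero.1 (le_antisymm hQ0 (abs_nonneg _))
  simp only [hQdef] at this
  by_contra hcon
  push_neg at hcon
  rw [min_eq_left hcon.le] at this
  exact absurd this (ne_of_lt hcon)
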